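/- Let Ω ⊆ ℂ be a nonempty open connected set and let Φ : Ω → ℍ_ℂ be a function whose four complex component functions are analytic on Ω, such that the scalar part of Φ(z) is 0 and normSq(Φ(z)) = 0 for all z ∈ Ω, and Φ is not identically zero on Ω. Then there exists a function χ : Ω → ℍ_ℂ whose four complex component functions are meromorphic on Ω, such that for all z in Ω outside a set that is discrete and closed in Ω one has normSq(χ(z)) ≠ 0 and Φ(z)·χ(z) = χ(z)·L (equivalently Φ(z) = χ(z)·L·χ(z)⁻¹). -/

import Mathlib

open Quaternion

/-- The complex quaternion `a + b i + c j + d k`. -/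
noncomputable def mkQ (a b c d : ℂ) : Quaternion ℂ := ⟨a, b, c, d⟩

/-- The null quaternion `L = i + 𝕚 j ∈ ℍ_ℂ`. -/
noncomputable def Lq : Quaternion ℂ := mkQ 0 1 Complex.I 0

lemma Lq_sq : Lq * Lq = 0 := by
  ext <;> simp only [Quaternion.re_mul, Quaternion.imI_mul, Quaternion.imJ_mul, Quaternion.imK_mul] <;> simp [Lq, mkQ]

lemma pure_null_sq (a : Quaternion ℂ) (h0 : a.re = 0) (h1 : normSq a = 0) : a * a = 0 := by
  have hs : star a = -a := Quaternion.star_eq_neg.mpr h0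
  have k : a * star a = 0 := by rw [Quaternion.self_mul_star, h1]; simp
  rw [hs] at k
  have k2 : -(a * a) = 0 := (mul_neg a a) ▸ k
  exact neg_eq_zero.mp k2

lemma aux_conj (Ω : Set ℂ) (hΩc : IsConnected Ω)
    (Φ : ℂ → Quaternion ℂ)
    (han_re : AnalyticOnNhd ℂ (fun z => (Φ z).re) Ω)
    (han_imI : AnalyticOnNhd ℂ (fun z => (Φ z).imI) Ω)
    (han_imJ : AnalyticOnNhd ℂ (fun z => (Φ z).imJ) Ω)
    (han_imK : AnalyticOnNhd ℂ (fun z => (Φ z).imK) Ω)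
    (hre : ∀ z ∈ Ω, (Φ z).re = 0)
    (hiso : ∀ z ∈ Ω, normSq (Φ z) = 0)
    (q : Quaternion ℂ) (z₀ : ℂ) (hz₀ : z₀ ∈ Ω)
    (hq : normSq (Φ z₀ * q + q * Lq) ≠ 0) :
    ∃ χ : ℂ → Quaternion ℂ,
      MeromorphicOn (fun z => (χ z).re) Ω ∧
      MeromorphicOn (fun z => (χ z).imI) Ω ∧
      MeromorphicOn (fun z => (χ z).imJ) Ω ∧
      MeromorphicOn (fun z => (χ z).imK) Ω ∧
      ∃ E : Set ℂ, E ⊆ Ω ∧ (∀ z ∈ Ω, ∃ U ∈ nhds z, (E ∩ U).Finite) ∧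
        ∀ z ∈ Ω \ E, normSq (χ z) ≠ 0 ∧ Φ z * χ z = χ z * Lq := by
  set χ : ℂ → Quaternion ℂ := fun z => Φ z * q + q * Lq with hχ
  have hA1 : AnalyticOnNhd ℂ (fun z => (χ z).re) Ω := by
    simp only [hχ, Quaternion.re_add, Quaternion.re_mul]
    exact ((((han_re.mul analyticOnNhd_const).sub (han_imI.mul analyticOnNhd_const)).sub
      (han_imJ.mul analyticOnNhd_const)).sub (han_imK.mul analyticOnNhd_const)).add
      analyticOnNhd_const
  have hA2 : AnalyticOnNhd ℂ (fun z => (χ z).imI) Ω := by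
    simp only [hχ, Quaternion.imI_add, Quaternion.imI_mul]
    exact ((((han_re.mul analyticOnNhd_const).add (han_imI.mul analyticOnNhd_const)).add
      (han_imJ.mul analyticOnNhd_const)).sub (han_imK.mul analyticOnNhd_const)).add
      analyticOnNhd_const
  have hA3 : AnalyticOnNhd ℂ (fun z => (χ z).imJ) Ω := by
    simp only [hχ, Quaternion.imJ_add, Quaternion.imJ_mul]
    exact ((((han_re.mul analyticOnNhd_const).sub (han_imI.mul analyticOnNhd_const)).add
      (han_imJ.mul analyticOnNhd_const)).add (han_imK.mul analyticOnNhd_const)).add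
      analyticOnNhd_const
  have hA4 : AnalyticOnNhd ℂ (fun z => (χ z).imK) Ω := by
    simp only [hχ, Quaternion.imK_add, Quaternion.imK_mul]
    exact ((((han_re.mul analyticOnNhd_const).add (han_imI.mul analyticOnNhd_const)).sub
      (han_imJ.mul analyticOnNhd_const)).add (han_imK.mul analyticOnNhd_const)).add
      analyticOnNhd_const
  -- the squared norm, as an analytic function
  set f : ℂ → ℂ := fun z => (χ z).re ^ 2 + (χ z).imI ^ 2 + (χ z).imJ ^ 2 + (χ z).imK ^ 2 with hf
  have hfval : ∀ z, f z = normSq (χ z) := fun z => (Quaternion.normSq_def' (χ z)).symm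
  have hAf : AnalyticOnNhd ℂ f Ω :=
    (((hA1.pow 2).add (hA2.pow 2)).add (hA3.pow 2)).add (hA4.pow 2)
  have hfz₀ : f z₀ ≠ 0 := by rw [hfval]; exact hq
  refine ⟨χ, hA1.meromorphicOn, hA2.meromorphicOn, hA3.meromorphicOn, hA4.meromorphicOn,
    {z ∈ Ω | f z = 0}, fun z hz => hz.1, ?_, ?_⟩
  · intro z hz
    have hfr : ¬ (∃ᶠ w in nhdsWithin z {z}ᶜ, f w = 0) := by
      intro hfreq
      exact hfz₀ (hAf.eqOn_zero_of_preconnected_of_frequently_eq_zero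
        hΩc.isPreconnected hz hfreq hz₀)
    rw [Filter.not_frequently] at hfr
    rw [eventually_nhdsWithin_iff] at hfr
    obtain ⟨U, hU, hUP⟩ := Filter.eventually_iff_exists_mem.mp hfr
    refine ⟨U, hU, Set.Finite.subset (Set.finite_singleton z) ?_⟩
    intro w hw
    by_contra hwz
    exact hUP w hw.2 (fun h => hwz h) hw.1.2
  · intro z hz
    have hz1 : z ∈ Ω := hz.1
    constructor
    · rw [← hfval]
      intro h0
      exact hz.2 ⟨hz1, h0⟩
    · have hΦsq : Φ z * Φ z = 0 := pure_null_sq _ (hre z hz1) (hiso z hz1)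
      show Φ z * (Φ z * q + q * Lq) = (Φ z * q + q * Lq) * Lq
      rw [mul_add, add_mul, ← mul_assoc, hΦsq, zero_mul, mul_assoc q, Lq_sq, mul_zero,
        zero_add, add_zero, mul_assoc]

theorem exists_meromorphic_conjugation (Ω : Set ℂ) (hΩo : IsOpen Ω) (hΩc : IsConnected Ω)
    (Φ : ℂ → Quaternion ℂ)
    (han_re : AnalyticOnNhd ℂ (fun z => (Φ z).re) Ω)
    (han_imI : AnalyticOnNhd ℂ (fun z => (Φ z).imI) Ω)
    (han_imJ : AnalyticOnNhd ℂ (fun z => (Φ z).imJ) Ω)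
    (han_imK : AnalyticOnNhd ℂ (fun z => (Φ z).imK) Ω)
    (hre : ∀ z ∈ Ω, (Φ z).re = 0)
    (hiso : ∀ z ∈ Ω, normSq (Φ z) = 0)
    (hne : ∃ z ∈ Ω, Φ z ≠ 0) :
    ∃ χ : ℂ → Quaternion ℂ,
      MeromorphicOn (fun z => (χ z).re) Ω ∧
      MeromorphicOn (fun z => (χ z).imI) Ω ∧
      MeromorphicOn (fun z => (χ z).imJ) Ω ∧
      MeromorphicOn (fun z => (χ z).imK) Ω ∧
      ∃ E : Set ℂ, E ⊆ Ω ∧ (∀ z ∈ Ω, ∃ U ∈ nhds z, (E ∩ U).Finite) ∧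
        ∀ z ∈ Ω \ E, normSq (χ z) ≠ 0 ∧ Φ z * χ z = χ z * Lq := by
  obtain ⟨z₀, hz₀, hΦ⟩ := hne
  by_cases h1 : normSq (Φ z₀ * 1 + 1 * Lq) ≠ 0
  · exact aux_conj Ω hΩc Φ han_re han_imI han_imJ han_imK hre hiso 1 z₀ hz₀ h1
  · push_neg at h1
    have h2 : normSq (Φ z₀ * mkQ 0 0 1 0 + mkQ 0 0 1 0 * Lq) ≠ 0 := by
      intro h2
      apply hΦ
      have hr0 : (Φ z₀).re = 0 := hre z₀ hz₀
      have hisoz : (Φ z₀).re ^ 2 + (Φ z₀).imI ^ 2 + (Φ z₀).imJ ^ 2 + (Φ z₀).imK ^ 2 = 0 := by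
        rw [← Quaternion.normSq_def']; exact hiso z₀ hz₀
      rw [Quaternion.normSq_def'] at h1 h2
      simp only [Quaternion.re_add, Quaternion.imI_add, Quaternion.imJ_add, Quaternion.imK_add,
        Quaternion.re_mul, Quaternion.imI_mul, Quaternion.imJ_mul, Quaternion.imK_mul,
        Quaternion.re_one, Quaternion.imI_one, Quaternion.imJ_one,
        Quaternion.imK_one] at h1 h2
      simp only [Lq, mkQ] at h1 h2
      set b := (Φ z₀).imI
      set c := (Φ z₀).imJ
      set d := (Φ z₀).imK
      have hb : b = 0 := by linear_combination (h1 - h2) / 4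
      have hc : c = 0 := by
        linear_combination (-Complex.I/4) * h1 + (-Complex.I/4) * h2 +
          (Complex.I/2) * hisoz + (Complex.I/2 + c) * Complex.I_mul_I
      have hd : d = 0 := by
        have hd2 : d ^ 2 = 0 := by linear_combination hisoz - (Φ z₀).re * hr0 - b * hb - c * hc
        exact pow_eq_zero_iff (two_ne_zero) |>.mp hd2
      ext <;> first | exact hr0 | exact hb | exact hc | exact hd
    exact aux_conj Ω hΩc Φ han_re han_imI han_imJ han_imK hre hiso (mkQ 0 0 1 0) z₀ hz₀ h2
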